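/- Let X be a right-continuous E1-valued process and Y a right-continuous E2-valued process. Then X is RC-compatible with Y (compatible with respect to the RC-compatibility structure indexed by (t,ε), t ≥ 0, ε > 0, built from time-averaged functionals) if and only if for all t > 0 and all bounded Borel h, E[h(Y) | F^Y_{t+} ∨ F^X_{t−}] = E[h(Y) | F^Y_{t+}] almost surely, where F^X_{t−} = ∨_{s<t} F^X_s and F^Y_{t+} = ∩_{s>t} F^Y_s for the natural filtrations of X and Y. -/

import Mathlib

open MeasureTheory ProbabilityTheory MeasurableSpace

/-- Natural filtration of a process at time `s` (σ-algebra generated by the values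
at times `u ∈ [0,s]`). -/
def natF {Ω E : Type} [MeasurableSpace E] (Z : Ω → ℝ → E) (s : ℝ) :
    MeasurableSpace Ω :=
  ⨆ u ∈ Set.Icc (0:ℝ) s, MeasurableSpace.comap (fun ω => Z ω u) inferInstance

/-- The σ-algebra `F^Y_{(t,ε)}` of the RC-compatibility structure: generated by the
forward time averages `∫_s^{s+r} g(Y(u)) du`, `s ≤ t`, `0 < r < ε`, `g ∈ C_b(E)`. -/
noncomputable def RCy {Ω E : Type} [TopologicalSpace E] (Y : Ω → ℝ → E) (t ε : ℝ) :
    MeasurableSpace Ω :=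
  ⨆ s ∈ Set.Icc (0:ℝ) t, ⨆ r ∈ Set.Ioo (0:ℝ) ε,
    ⨆ g ∈ {g : E → ℝ | Continuous g ∧ ∃ M, ∀ x, |g x| ≤ M},
      MeasurableSpace.comap (fun ω => ∫ u in s..(s + r), g (Y ω u)) inferInstance

/-- The σ-algebra `F^X_{(t,ε)}` of the RC-compatibility structure: generated by the
backward time averages `∫_{(s−r)∨0}^s g(X(u)) du`, `s ≤ t`, `0 < r < ε`, `g ∈ C_b(E)`. -/
noncomputable def RCx {Ω E : Type} [TopologicalSpace E] (X : Ω → ℝ → E) (t ε : ℝ) :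
    MeasurableSpace Ω :=
  ⨆ s ∈ Set.Icc (0:ℝ) t, ⨆ r ∈ Set.Ioo (0:ℝ) ε,
    ⨆ g ∈ {g : E → ℝ | Continuous g ∧ ∃ M, ∀ x, |g x| ≤ M},
      MeasurableSpace.comap (fun ω => ∫ u in (max (s - r) 0)..s, g (X ω u)) inferInstance


namespace Stmt13Aux
open Filter Set


noncomputable def vstep (a h u : ℝ) : ℝ := a + h * ⌈(u - a) / h⌉

lemma vstep_ge {a h : ℝ} (hh : 0 < h) (u : ℝ) : u ≤ vstep a h u := by
  have := Int.le_ceil ((u - a) / h)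
  have h2 : (u - a) / h * h ≤ (⌈(u - a) / h⌉ : ℝ) * h :=
    mul_le_mul_of_nonneg_right this hh.le
  rw [div_mul_cancel₀ _ hh.ne'] at h2
  unfold vstep; linarith [h2]

lemma vstep_lt {a h : ℝ} (hh : 0 < h) (u : ℝ) : vstep a h u < u + h := by
  have := Int.ceil_lt_add_one ((u - a) / h)
  have h2 : (⌈(u - a) / h⌉ : ℝ) * h < ((u - a) / h + 1) * h :=
    mul_lt_mul_of_pos_right this hh
  rw [add_mul, div_mul_cancel₀ _ hh.ne'] at h2
  unfold vstep; linarith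

lemma measurable_comp_vstep {β : Type*} [MeasurableSpace β] (φ : ℝ → β) (a h : ℝ) :
    Measurable fun u => φ (vstep a h u) := by
  have : (fun u => φ (vstep a h u))
      = (fun k : ℤ => φ (a + h * k)) ∘ (fun u => ⌈(u - a) / h⌉) := rfl
  rw [this]
  exact (measurable_of_countable _).comp
    (Int.measurable_ceil.comp ((measurable_id.sub measurable_const).div_const h))

lemma tendsto_vstep {a u : ℝ} {δ : ℕ → ℝ} (hpos : ∀ n, 0 < δ n)
    (h0 : Tendsto δ atTop (nhds 0)) :
    Tendsto (fun n => vstep a (δ n) u) atTop (nhdsWithin u (Set.Ici u)) := by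
  apply tendsto_nhdsWithin_of_tendsto_nhds_of_eventually_within
  · have hup : Tendsto (fun n => u + δ n) atTop (nhds u) := by
      simpa using tendsto_const_nhds.add h0
    exact tendsto_of_tendsto_of_tendsto_of_le_of_le
      (f := fun n => vstep a (δ n) u) (g := fun _ => u) (h := fun n => u + δ n)
      tendsto_const_nhds hup (fun n => vstep_ge (hpos n) u)
      (fun n => (vstep_lt (hpos n) u).le)
  · exact Eventually.of_forall fun n => vstep_ge (hpos n) u

lemma tendsto_of_abs_sub_le {f : ℕ → ℝ} {L : ℝ} {b : ℕ → ℝ}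
    (h : ∀ n, |f n - L| ≤ b n) (hb : Tendsto b atTop (nhds 0)) :
    Tendsto f atTop (nhds L) := by
  rw [tendsto_iff_dist_tendsto_zero]
  exact squeeze_zero (fun n => dist_nonneg) (fun n => by rw [Real.dist_eq]; exact h n) hb

section GZ

variable {E : Type*} [TopologicalSpace E] {Z : ℝ → E} {g : E → ℝ} {M : ℝ}

lemma gz_tendsto_at (hZ : ∀ u, 0 ≤ u → ContinuousWithinAt Z (Set.Ici u) u)
    (hg : Continuous g) {u : ℝ} (hu : 0 ≤ u) {v : ℕ → ℝ}
    (hvt : Tendsto v atTop (nhdsWithin u (Set.Ici u))) :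
    Tendsto (fun n => g (Z (v n))) atTop (nhds (g (Z u))) := by
  have h1 : ContinuousWithinAt (fun x => g (Z x)) (Set.Ici u) u :=
    hg.continuousAt.comp_continuousWithinAt (hZ u hu)
  exact h1.tendsto.comp hvt

lemma gz_aemeas (hZ : ∀ u, 0 ≤ u → ContinuousWithinAt Z (Set.Ici u) u)
    (hg : Continuous g) {a b : ℝ} (ha : 0 ≤ a) :
    AEMeasurable (fun u => g (Z u)) (volume.restrict (Set.Ioc a b)) := by
  rcases le_or_gt b a with hba | hab
  · rw [Set.Ioc_eq_empty (by exact fun hlt => absurd hba (not_le.2 hlt)),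
      Measure.restrict_empty]
    exact aemeasurable_zero_measure
  · have hseq : ∀ n : ℕ, (0:ℝ) < (b - a) / (n + 1) := fun n =>
      div_pos (by linarith) (by positivity)
    have h0 : Tendsto (fun n : ℕ => (b - a) / (n + 1)) atTop (nhds 0) := by
      have := tendsto_one_div_add_atTop_nhds_zero_nat (𝕜 := ℝ)
      have h2 := this.const_mul (b - a)
      simp only [mul_zero] at h2
      convert h2 using 2 with n
      ring
    refine aemeasurable_of_tendsto_metrizable_ae atTop
      (f := fun (n : ℕ) u => g (Z (vstep a ((b - a) / (n + 1)) u)))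
      (fun n => (measurable_comp_vstep (fun x => g (Z x)) a _).aemeasurable) ?_
    filter_upwards [ae_restrict_mem measurableSet_Ioc] with u hu
    exact gz_tendsto_at hZ hg (le_trans ha hu.1.le) (tendsto_vstep hseq h0)

lemma gz_intervalIntegrable (hZ : ∀ u, 0 ≤ u → ContinuousWithinAt Z (Set.Ici u) u)
    (hg : Continuous g) (hM : ∀ x, |g x| ≤ M) {a b : ℝ} (ha : 0 ≤ a) (hab : a ≤ b) :
    IntervalIntegrable (fun u => g (Z u)) volume a b := by
  rw [intervalIntegrable_iff, Set.uIoc_of_le hab]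
  refine Integrable.mono' (g := fun _ => M)
    (integrableOn_const (μ := volume) (s := Set.Ioc a b) (C := M) measure_Ioc_lt_top.ne)
    (gz_aemeas hZ hg ha).aestronglyMeasurable
    (Eventually.of_forall fun u => by rw [Real.norm_eq_abs]; exact hM (Z u))

end GZ


section GZ2
variable {E : Type*} [TopologicalSpace E] {Z : ℝ → E} {g : E → ℝ} {M : ℝ}
lemma hseq_tendsto (a b : ℝ) : Tendsto (fun n : ℕ => (b - a) / (n + 1)) atTop (nhds 0) := by
  have := tendsto_one_div_add_atTop_nhds_zero_nat (𝕜 := ℝ)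
  have h2 := this.const_mul (b - a)
  simp only [mul_zero] at h2
  convert h2 using 2 with n
  ring

lemma gz_riemann (hZ : ∀ u, 0 ≤ u → ContinuousWithinAt Z (Set.Ici u) u)
    (hg : Continuous g) (hM : ∀ x, |g x| ≤ M) {a b : ℝ} (ha : 0 ≤ a) (hab : a < b) :
    Tendsto (fun n : ℕ => ∑ i ∈ Finset.range (n + 1),
        (b - a) / (n + 1) * g (Z (a + (b - a) / (n + 1) * (i + 1))))
      atTop (nhds (∫ u in a..b, g (Z u))) := by
  -- the Riemann sum equals the integral of the step approximation
  have key : ∀ n : ℕ, ∑ i ∈ Finset.range (n + 1),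
      (b - a) / (n + 1) * g (Z (a + (b - a) / (n + 1) * (i + 1)))
      = ∫ u in a..b, g (Z (vstep a ((b - a) / (n + 1)) u)) := by
    intro n
    set h : ℝ := (b - a) / (n + 1) with hh_def
    have hh : 0 < h := div_pos (by linarith) (by positivity)
    set p : ℕ → ℝ := fun i => a + h * i with hp_def
    have hpmono : ∀ i : ℕ, p i ≤ p (i + 1) := by
      intro i
      simp only [hp_def]
      push_cast
      nlinarith [hh]
    have hstep : ∀ i : ℕ, ∀ u ∈ Set.Ioc (p i) (p (i + 1)),
        vstep a h u = p (i + 1) := by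
      intro i u hu
      have h1 : (i : ℝ) < (u - a) / h := by
        rw [lt_div_iff₀ hh]
        have := hu.1
        simp only [hp_def] at this
        linarith
      have h2 : (u - a) / h ≤ (i : ℝ) + 1 := by
        rw [div_le_iff₀ hh]
        have := hu.2
        simp only [hp_def] at this
        push_cast at this ⊢
        linarith
      have hceil : ⌈(u - a) / h⌉ = (i : ℤ) + 1 := by
        rw [Int.ceil_eq_iff]
        constructor
        · push_cast; linarith
        · push_cast; linarith
      simp only [vstep, hceil, hp_def]
      push_cast
      ring
    have hpiece : ∀ i : ℕ, ∫ u in (p i)..(p (i + 1)), g (Z (vstep a h u))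
        = h * g (Z (p (i + 1))) := by
      intro i
      rw [intervalIntegral.integral_of_le (hpmono i)]
      rw [setIntegral_congr_fun measurableSet_Ioc
        (fun u hu => by rw [hstep i u hu])]
      rw [setIntegral_const, measureReal_def, Real.volume_Ioc, ENNReal.toReal_ofReal (by
        have := hpmono i; linarith), smul_eq_mul]
      congr 1
      simp only [hp_def]
      push_cast
      ring
    have hint : ∀ i : ℕ, i < n + 1 → IntervalIntegrable
        (fun u => g (Z (vstep a h u))) volume (p i) (p (i + 1)) := by
      intro i _
      rw [intervalIntegrable_iff, Set.uIoc_of_le (hpmono i)]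
      refine IntegrableOn.congr_fun (f := fun _ => g (Z (p (i + 1))))
        (integrableOn_const (μ := volume) (s := Set.Ioc (p i) (p (i + 1)))
          (C := g (Z (p (i + 1)))) measure_Ioc_lt_top.ne)
        (fun u hu => by rw [hstep i u hu]) measurableSet_Ioc
    have hadj := intervalIntegral.sum_integral_adjacent_intervals hint
    have hp0 : p 0 = a := by simp [hp_def]
    have hpN : p (n + 1) = b := by
      simp only [hp_def, hh_def]
      push_cast
      field_simp
      ring
    rw [hp0, hpN] at hadj
    rw [← hadj]
    refine Finset.sum_congr rfl fun i _ => ?_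
    rw [hpiece i]
    have hpi : p (i + 1) = a + h * (↑i + 1) := by simp only [hp_def]; push_cast; ring
    rw [hpi]
  -- dominated convergence
  have hconv : Tendsto (fun n : ℕ => ∫ u in a..b, g (Z (vstep a ((b - a) / (n + 1)) u)))
      atTop (nhds (∫ u in a..b, g (Z u))) := by
    have hseq : ∀ n : ℕ, (0:ℝ) < (b - a) / (n + 1) := fun n =>
      div_pos (by linarith) (by positivity)
    refine _root_.intervalIntegral.tendsto_integral_filter_of_dominated_convergence
      (bound := fun _ => M)
      (Eventually.of_forall fun n =>
        (measurable_comp_vstep (fun x => g (Z x)) a _).aestronglyMeasurable)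
      (Eventually.of_forall fun n => Eventually.of_forall fun u _ => by
        rw [Real.norm_eq_abs]; exact hM _)
      intervalIntegrable_const ?_
    refine Eventually.of_forall fun u hu => ?_
    rw [Set.uIoc_of_le hab.le] at hu
    exact gz_tendsto_at hZ hg (le_trans ha hu.1.le) (tendsto_vstep hseq (hseq_tendsto a b))
  exact hconv.congr (fun n => (key n).symm)

/-- average over `[u, u+δₙ]` tends to the value at `u`, by right continuity. -/
lemma gz_avg_tendsto (hZ : ∀ u, 0 ≤ u → ContinuousWithinAt Z (Set.Ici u) u)
    (hg : Continuous g) (hM : ∀ x, |g x| ≤ M) {u : ℝ} (hu : 0 ≤ u)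
    {δ : ℕ → ℝ} (hp : ∀ n, 0 < δ n) (h0 : Tendsto δ atTop (nhds 0)) :
    Tendsto (fun n => (∫ v in u..(u + δ n), g (Z v)) / δ n) atTop (nhds (g (Z u))) := by
  rw [Metric.tendsto_atTop]
  intro η hη
  have hc : ContinuousWithinAt (fun v => g (Z v)) (Set.Ici u) u :=
    hg.continuousAt.comp_continuousWithinAt (hZ u hu)
  obtain ⟨δ₀, hδ₀, hball⟩ := Metric.continuousWithinAt_iff.1 hc (η / 2) (by linarith)
  obtain ⟨N, hN⟩ := (h0.eventually_lt_const hδ₀).exists_forall_of_atTop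
  refine ⟨N, fun n hn => ?_⟩
  have hδn := hp n
  have hδnlt := hN n hn
  have hint : IntervalIntegrable (fun v => g (Z v)) volume u (u + δ n) :=
    gz_intervalIntegrable hZ hg hM hu (by linarith)
  have hsub : ∫ v in u..(u + δ n), (g (Z v) - g (Z u))
      = (∫ v in u..(u + δ n), g (Z v)) - g (Z u) * δ n := by
    rw [intervalIntegral.integral_sub hint intervalIntegrable_const,
      intervalIntegral.integral_const, smul_eq_mul]
    ring_nf
  have hbound : |(∫ v in u..(u + δ n), g (Z v)) - g (Z u) * δ n| ≤ η / 2 * δ n := by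
    rw [← hsub]
    have := intervalIntegral.norm_integral_le_of_norm_le_const
      (C := η / 2) (f := fun v => g (Z v) - g (Z u)) (a := u) (b := u + δ n)
      (fun x hx => by
        rw [Set.uIoc_of_le (by linarith : u ≤ u + δ n)] at hx
        have hx1 : x ∈ Set.Ici u := le_of_lt hx.1
        have hx2 : dist x u < δ₀ := by
          rw [Real.dist_eq, abs_of_nonneg (by linarith [hx.1.le] : (0:ℝ) ≤ x - u)]
          linarith [hx.2]
        have := hball hx1 hx2
        rw [Real.dist_eq] at this
        rw [Real.norm_eq_abs]
        exact this.le)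
    rw [Real.norm_eq_abs] at this
    calc |(∫ v in u..(u + δ n), (g (Z v) - g (Z u)))| ≤ η / 2 * |u + δ n - u| := this
      _ = η / 2 * δ n := by rw [show u + δ n - u = δ n by ring, abs_of_pos hδn]
  have heq : (∫ v in u..(u + δ n), g (Z v)) / δ n - g (Z u)
      = ((∫ v in u..(u + δ n), g (Z v)) - g (Z u) * δ n) / δ n := by
    field_simp
  rw [Real.dist_eq, heq, abs_div, abs_of_pos hδn]
  calc |(∫ v in u..(u + δ n), g (Z v)) - g (Z u) * δ n| / δ n ≤ (η / 2 * δ n) / δ n :=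
        (div_le_div_iff_of_pos_right hδn).2 hbound
    _ = η / 2 := by field_simp
    _ < η := by linarith


end GZ2
section MeasII
variable {E : Type*} [TopologicalSpace E] [MeasurableSpace E] [OpensMeasurableSpace E]
  {Ω : Type*} {m : MeasurableSpace Ω}
  {Z : Ω → ℝ → E} {g : E → ℝ} {M : ℝ}

/-- measurability of a time-average w.r.t. a σ-algebra for which the relevant
coordinates are measurable. -/
lemma meas_II (hZ : ∀ ω u, 0 ≤ u → ContinuousWithinAt (Z ω) (Set.Ici u) u)
    (hg : Continuous g) (hM : ∀ x, |g x| ≤ M) {a b : ℝ} (ha : 0 ≤ a) (hab : a ≤ b)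
    (hcoord : ∀ u, a ≤ u → u ≤ b → Measurable[m] fun ω => Z ω u) :
    Measurable[m] fun ω => ∫ u in a..b, g (Z ω u) := by
  rcases eq_or_lt_of_le hab with heq | hlt
  · subst heq
    have : (fun ω => ∫ u in a..a, g (Z ω u)) = fun _ => (0:ℝ) :=
      funext fun ω => intervalIntegral.integral_same
    rw [this]; exact measurable_const
  · have hh : ∀ n : ℕ, (0:ℝ) < (b - a) / (n + 1) := fun n =>
      div_pos (by linarith) (by positivity)
    refine measurable_of_tendsto_metrizable
      (f := fun n ω => ∑ i ∈ Finset.range (n + 1),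
        (b - a) / (n + 1) * g (Z ω (a + (b - a) / (n + 1) * (i + 1)))) (fun n => ?_) ?_
    · refine Finset.measurable_sum _ fun i hi => ?_
      have hi' : (i : ℝ) + 1 ≤ (n : ℝ) + 1 := by
        have : (i : ℝ) ≤ (n : ℝ) := Nat.cast_le.2 (Nat.lt_succ_iff.1 (Finset.mem_range.1 hi))
        linarith
      have h1 : a ≤ a + (b - a) / (n + 1) * (i + 1) := by
        nlinarith [hh n, (by positivity : (0:ℝ) ≤ (i:ℝ) + 1)]
      have h2 : a + (b - a) / (n + 1) * (i + 1) ≤ b := by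
        have : (b - a) / (n + 1) * ((i:ℝ) + 1) ≤ (b - a) / (n + 1) * ((n:ℝ) + 1) :=
          mul_le_mul_of_nonneg_left hi' (hh n).le
        have hx : (b - a) / (n + 1) * ((n:ℝ) + 1) = b - a := by field_simp
        linarith [hx ▸ this]
      exact measurable_const.mul (hg.measurable.comp (hcoord _ h1 h2))
    · rw [tendsto_pi_nhds]
      exact fun ω => gz_riemann (hZ ω) hg hM ha hlt
end MeasII

/-- pointwise coordinate σ-algebra up to (not incl.) time t -/
def ptF {Ω E : Type*} [MeasurableSpace E] (Z : Ω → ℝ → E) (t : ℝ) :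
    MeasurableSpace Ω :=
  ⨆ u ∈ Set.Ico (0:ℝ) t, MeasurableSpace.comap (fun ω => Z ω u) inferInstance

section Sigma
variable {Ω E : Type} [MeasurableSpace E] {Z : Ω → ℝ → E}

lemma measurable_ptF_coord {u t : ℝ} (hu : 0 ≤ u) (hut : u < t) :
    Measurable[ptF Z t] fun ω => Z ω u :=
  measurable_iff_comap_le.2 (le_iSup₂ (f := fun u (_ : u ∈ Set.Ico (0:ℝ) t) =>
    MeasurableSpace.comap (fun ω => Z ω u) inferInstance) u ⟨hu, hut⟩)

lemma ptF_mono {t t' : ℝ} (h : t ≤ t') : ptF Z t ≤ ptF Z t' :=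
  iSup₂_le fun u hu => le_iSup₂ (f := fun u (_ : u ∈ Set.Ico (0:ℝ) t') =>
    MeasurableSpace.comap (fun ω => Z ω u) inferInstance) u ⟨hu.1, lt_of_lt_of_le hu.2 h⟩

lemma coord_le_natF {u s : ℝ} (hu : 0 ≤ u) (hus : u ≤ s) :
    MeasurableSpace.comap (fun ω => Z ω u) inferInstance ≤ natF Z s :=
  le_iSup₂ (f := fun u (_ : u ∈ Set.Icc (0:ℝ) s) =>
    MeasurableSpace.comap (fun ω => Z ω u) inferInstance) u ⟨hu, hus⟩

lemma sup_natF_eq_ptF (t : ℝ) : (⨆ s ∈ Set.Ico (0:ℝ) t, natF Z s) = ptF Z t := by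
  apply le_antisymm
  · refine iSup₂_le fun s hs => iSup₂_le fun u hu => ?_
    exact le_iSup₂ (f := fun u (_ : u ∈ Set.Ico (0:ℝ) t) =>
      MeasurableSpace.comap (fun ω => Z ω u) inferInstance) u
      ⟨hu.1, lt_of_le_of_lt hu.2 hs.2⟩
  · refine iSup₂_le fun u hu => ?_
    exact le_trans (coord_le_natF hu.1 le_rfl)
      (le_iSup₂ (f := fun s (_ : s ∈ Set.Ico (0:ℝ) t) => natF Z s) u hu)

lemma natF_le_ptF {s t : ℝ} (h : s < t) : natF Z s ≤ ptF Z t :=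
  iSup₂_le fun u hu => le_iSup₂ (f := fun u (_ : u ∈ Set.Ico (0:ℝ) t) =>
    MeasurableSpace.comap (fun ω => Z ω u) inferInstance) u ⟨hu.1, lt_of_le_of_lt hu.2 h⟩

lemma iInf_natF_le_ptF {t ε : ℝ} (hε : 0 < ε) :
    (⨅ s ∈ Set.Ioi t, natF Z s) ≤ ptF Z (t + ε) := by
  refine le_trans (iInf₂_le (t + ε / 2) (by simp [Set.mem_Ioi]; linarith)) ?_
  exact natF_le_ptF (by linarith)

lemma coord_comap_le_comap (u : ℝ) :
    MeasurableSpace.comap (fun ω => Z ω u) inferInstance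
      ≤ MeasurableSpace.comap Z MeasurableSpace.pi := by
  have : (fun ω => Z ω u) = (fun p : ℝ → E => p u) ∘ Z := rfl
  rw [this, ← MeasurableSpace.comap_comp]
  exact MeasurableSpace.comap_mono (measurable_iff_comap_le.1 (measurable_pi_apply u))

lemma natF_le_comap (s : ℝ) : natF Z s ≤ MeasurableSpace.comap Z MeasurableSpace.pi :=
  iSup₂_le fun u _ => coord_comap_le_comap u

lemma ptF_le_comap (t : ℝ) : ptF Z t ≤ MeasurableSpace.comap Z MeasurableSpace.pi :=
  iSup₂_le fun u _ => coord_comap_le_comap u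

lemma iInf_natF_le_comap (t : ℝ) :
    (⨅ s ∈ Set.Ioi t, natF Z s) ≤ MeasurableSpace.comap Z MeasurableSpace.pi :=
  le_trans (iInf₂_le (t + 1) (by simp)) (natF_le_comap _)

lemma iInf_ptF_le_iInf_natF (t : ℝ) :
    (⨅ n : ℕ, ptF Z (t + 1 / (n + 1))) ≤ ⨅ s ∈ Set.Ioi t, natF Z s := by
  refine le_iInf₂ fun s hs => ?_
  obtain ⟨n, hn⟩ := exists_nat_one_div_lt (by simpa using hs : 0 < s - t)
  refine le_trans (iInf_le _ n) (iSup₂_le fun u hu => coord_le_natF hu.1 ?_)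
  have : t + 1 / (n + 1) ≤ s := by linarith [hn]
  linarith [hu.2]

end Sigma

/-- A function into a Polish space is measurable iff all bounded continuous
post-compositions are. -/
lemma meas_of_cb {E : Type*} [TopologicalSpace E] [MeasurableSpace E] [PolishSpace E]
    [BorelSpace E] {Ω : Type*} {m : MeasurableSpace Ω} {f : Ω → E}
    (H : ∀ g : E → ℝ, Continuous g → (∃ M, ∀ x, |g x| ≤ M) →
      Measurable[m] fun ω => g (f ω)) : Measurable[m] f := by
  letI := TopologicalSpace.upgradeIsCompletelyMetrizable E
  apply measurable_of_isClosed
  intro s hs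
  rcases s.eq_empty_or_nonempty with rfl | hne
  · simp
  · have hφc : Continuous fun x => min (Metric.infDist x s) 1 :=
      (Metric.continuous_infDist_pt s).min continuous_const
    have hφb : ∀ x, |min (Metric.infDist x s) 1| ≤ 1 := by
      intro x
      rw [abs_le]
      constructor
      · have := Metric.infDist_nonneg (x := x) (s := s)
        have h1 : (0:ℝ) ≤ min (Metric.infDist x s) 1 := le_min this zero_le_one
        linarith
      · exact min_le_right _ _
    have hmeas := H _ hφc ⟨1, hφb⟩
    have : f ⁻¹' s = (fun ω => min (Metric.infDist (f ω) s) 1) ⁻¹' {0} := by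
      ext ω
      simp only [Set.mem_preimage, Set.mem_singleton_iff]
      constructor
      · intro hmem
        rw [Metric.infDist_zero_of_mem hmem]
        simp
      · intro h0
        have hd : Metric.infDist (f ω) s = 0 := by
          rcases min_cases (Metric.infDist (f ω) s) 1 with ⟨hmin, _⟩ | ⟨hmin, _⟩
          · rw [← hmin]; exact h0
          · rw [hmin] at h0; norm_num at h0
        exact (hs.mem_iff_infDist_zero hne).2 hd
    rw [this]
    exact hmeas (measurableSet_singleton 0)
section RC
variable {Ω E : Type} [MeasurableSpace E] [TopologicalSpace E] [PolishSpace E] [BorelSpace E]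
  {Y : Ω → ℝ → E}

lemma measurable_RCy_gen (Y : Ω → ℝ → E) {t ε : ℝ} {s r : ℝ} (hs : s ∈ Set.Icc (0:ℝ) t)
    (hr : r ∈ Set.Ioo (0:ℝ) ε) {g : E → ℝ}
    (hg : g ∈ {g : E → ℝ | Continuous g ∧ ∃ M, ∀ x, |g x| ≤ M}) :
    Measurable[RCy Y t ε] fun ω => ∫ u in s..(s + r), g (Y ω u) := by
  refine measurable_iff_comap_le.2 ?_
  calc MeasurableSpace.comap (fun ω => ∫ u in s..(s + r), g (Y ω u)) inferInstance
      ≤ ⨆ g ∈ {g : E → ℝ | Continuous g ∧ ∃ M, ∀ x, |g x| ≤ M},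
          MeasurableSpace.comap (fun ω => ∫ u in s..(s + r), g (Y ω u)) inferInstance :=
        le_iSup₂ (f := fun g (_ : g ∈ {g : E → ℝ | Continuous g ∧ ∃ M, ∀ x, |g x| ≤ M}) =>
          MeasurableSpace.comap (fun ω => ∫ u in s..(s + r), g (Y ω u)) inferInstance) g hg
    _ ≤ ⨆ r ∈ Set.Ioo (0:ℝ) ε, ⨆ g ∈ {g : E → ℝ | Continuous g ∧ ∃ M, ∀ x, |g x| ≤ M},
          MeasurableSpace.comap (fun ω => ∫ u in s..(s + r), g (Y ω u)) inferInstance :=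
        le_iSup₂ (f := fun r (_ : r ∈ Set.Ioo (0:ℝ) ε) =>
          ⨆ g ∈ {g : E → ℝ | Continuous g ∧ ∃ M, ∀ x, |g x| ≤ M},
            MeasurableSpace.comap (fun ω => ∫ u in s..(s + r), g (Y ω u)) inferInstance) r hr
    _ ≤ RCy Y t ε :=
        le_iSup₂ (f := fun s (_ : s ∈ Set.Icc (0:ℝ) t) =>
          ⨆ r ∈ Set.Ioo (0:ℝ) ε,
            ⨆ g ∈ {g : E → ℝ | Continuous g ∧ ∃ M, ∀ x, |g x| ≤ M},
              MeasurableSpace.comap (fun ω => ∫ u in s..(s + r), g (Y ω u)) inferInstance) s hs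

lemma measurable_RCx_gen (X : Ω → ℝ → E) {t ε : ℝ} {s r : ℝ} (hs : s ∈ Set.Icc (0:ℝ) t)
    (hr : r ∈ Set.Ioo (0:ℝ) ε) {g : E → ℝ}
    (hg : g ∈ {g : E → ℝ | Continuous g ∧ ∃ M, ∀ x, |g x| ≤ M}) :
    Measurable[RCx X t ε] fun ω => ∫ u in (max (s - r) 0)..s, g (X ω u) := by
  refine measurable_iff_comap_le.2 ?_
  calc MeasurableSpace.comap (fun ω => ∫ u in (max (s - r) 0)..s, g (X ω u)) inferInstance
      ≤ ⨆ g ∈ {g : E → ℝ | Continuous g ∧ ∃ M, ∀ x, |g x| ≤ M},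
          MeasurableSpace.comap (fun ω => ∫ u in (max (s - r) 0)..s, g (X ω u)) inferInstance :=
        le_iSup₂ (f := fun g (_ : g ∈ {g : E → ℝ | Continuous g ∧ ∃ M, ∀ x, |g x| ≤ M}) =>
          MeasurableSpace.comap (fun ω => ∫ u in (max (s - r) 0)..s, g (X ω u)) inferInstance) g hg
    _ ≤ ⨆ r ∈ Set.Ioo (0:ℝ) ε, ⨆ g ∈ {g : E → ℝ | Continuous g ∧ ∃ M, ∀ x, |g x| ≤ M},
          MeasurableSpace.comap (fun ω => ∫ u in (max (s - r) 0)..s, g (X ω u)) inferInstance :=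
        le_iSup₂ (f := fun r (_ : r ∈ Set.Ioo (0:ℝ) ε) =>
          ⨆ g ∈ {g : E → ℝ | Continuous g ∧ ∃ M, ∀ x, |g x| ≤ M},
            MeasurableSpace.comap (fun ω => ∫ u in (max (s - r) 0)..s, g (X ω u)) inferInstance) r hr
    _ ≤ RCx X t ε :=
        le_iSup₂ (f := fun s (_ : s ∈ Set.Icc (0:ℝ) t) =>
          ⨆ r ∈ Set.Ioo (0:ℝ) ε,
            ⨆ g ∈ {g : E → ℝ | Continuous g ∧ ∃ M, ∀ x, |g x| ≤ M},
              MeasurableSpace.comap (fun ω => ∫ u in (max (s - r) 0)..s, g (X ω u)) inferInstance) s hs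

lemma RCy_eq (hYrc : ∀ ω t, 0 ≤ t → ContinuousWithinAt (Y ω) (Set.Ici t) t)
    {t ε : ℝ} (ht : 0 ≤ t) (hε : 0 < ε) : RCy Y t ε = ptF Y (t + ε) := by
  apply le_antisymm
  · refine iSup₂_le fun s hs => iSup₂_le fun r hr => iSup₂_le fun g hg => ?_
    obtain ⟨hgc, M, hM⟩ := hg
    refine measurable_iff_comap_le.1 (meas_II hYrc hgc hM hs.1 (by linarith [hr.1]) ?_)
    intro u hu1 hu2
    exact measurable_ptF_coord (le_trans hs.1 hu1)
      (lt_of_le_of_lt hu2 (by linarith [hs.2, hr.2]))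
  · refine iSup₂_le fun u hu => measurable_iff_comap_le.1 (meas_of_cb fun g hgc hgb => ?_)
    obtain ⟨M, hM⟩ := hgb
    rcases le_or_gt u t with hut | htu
    · -- u ≤ t : directly use forward averages at s = u
      set δ : ℕ → ℝ := fun n => (ε / 2) / (n + 1) with hδ_def
      have hp : ∀ n, 0 < δ n := fun n => div_pos (by linarith) (by positivity)
      have h0 : Tendsto δ atTop (nhds 0) := by
        have := hseq_tendsto 0 (ε / 2)
        simpa [hδ_def] using this
      have hmeasn : ∀ n, Measurable[RCy Y t ε]
          fun ω => (∫ v in u..(u + δ n), g (Y ω v)) / δ n := by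
        intro n
        refine Measurable.div_const ?_ (δ n)
        exact measurable_RCy_gen Y ⟨hu.1, hut⟩
          ⟨hp n, by
            have h1 : (1:ℝ) ≤ (n:ℝ) + 1 := by
              have : (0:ℝ) ≤ (n:ℝ) := Nat.cast_nonneg n
              linarith
            have : δ n ≤ ε / 2 := div_le_self (by linarith) h1
            linarith⟩ ⟨hgc, M, hM⟩
      exact @measurable_of_tendsto_metrizable Ω ℝ (RCy Y t ε) _ _ _ _ _ _ hmeasn
        (tendsto_pi_nhds.2 fun ω => gz_avg_tendsto (hYrc ω) hgc hM hu.1 hp h0)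
    · -- t < u < t + ε : difference of forward averages anchored at t
      set δ : ℕ → ℝ := fun n => ((t + ε - u) / 2) / (n + 1) with hδ_def
      have hue : u < t + ε := hu.2
      have hp : ∀ n, 0 < δ n := fun n => by
        have : 0 < t + ε - u := by linarith
        positivity
      have hδhalf : ∀ n, δ n ≤ (t + ε - u) / 2 := fun n => by
        have h1 : (1:ℝ) ≤ (n:ℝ) + 1 := by
          have : (0:ℝ) ≤ (n:ℝ) := Nat.cast_nonneg n
          linarith
        exact div_le_self (by linarith) h1
      have h0 : Tendsto δ atTop (nhds 0) := by
        have := hseq_tendsto 0 ((t + ε - u) / 2)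
        simpa [hδ_def] using this
      have hu0 : 0 ≤ u := le_trans ht htu.le
      have hmeasn : ∀ n, Measurable[RCy Y t ε]
          fun ω => (∫ v in u..(u + δ n), g (Y ω v)) / δ n := by
        intro n
        have hG1 : Measurable[RCy Y t ε] fun ω => ∫ v in t..(t + (u - t)), g (Y ω v) :=
          measurable_RCy_gen Y ⟨ht, le_rfl⟩ ⟨by linarith, by linarith⟩ ⟨hgc, M, hM⟩
        have hG2 : Measurable[RCy Y t ε]
            fun ω => ∫ v in t..(t + (u - t + δ n)), g (Y ω v) :=
          measurable_RCy_gen Y ⟨ht, le_rfl⟩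
            ⟨by linarith [hp n], by linarith [hδhalf n]⟩ ⟨hgc, M, hM⟩
        have e1 : t + (u - t) = u := by ring
        have e2 : t + (u - t + δ n) = u + δ n := by ring
        rw [e1] at hG1
        rw [e2] at hG2
        have hrw : (fun ω => (∫ v in u..(u + δ n), g (Y ω v)) / δ n)
            = fun ω => ((∫ v in t..(u + δ n), g (Y ω v))
                - (∫ v in t..u, g (Y ω v))) / δ n := by
          funext ω
          rw [intervalIntegral.integral_interval_sub_left
            (gz_intervalIntegrable (hYrc ω) hgc hM ht (by linarith [hp n]))
            (gz_intervalIntegrable (hYrc ω) hgc hM ht (by linarith))]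
        rw [hrw]
        exact (hG2.sub hG1).div_const (δ n)
      exact @measurable_of_tendsto_metrizable Ω ℝ (RCy Y t ε) _ _ _ _ _ _ hmeasn
        (tendsto_pi_nhds.2 fun ω => gz_avg_tendsto (hYrc ω) hgc hM hu0 hp h0)

lemma RCx_eq {X : Ω → ℝ → E} (hXrc : ∀ ω t, 0 ≤ t → ContinuousWithinAt (X ω) (Set.Ici t) t)
    {t ε : ℝ} (ht : 0 ≤ t) (hε : 0 < ε) : RCx X t ε = ptF X t := by
  apply le_antisymm
  · refine iSup₂_le fun s hs => iSup₂_le fun r hr => iSup₂_le fun g hg => ?_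
    obtain ⟨hgc, M, hM⟩ := hg
    refine measurable_iff_comap_le.1 ?_
    rcases eq_or_lt_of_le hs.1 with hs0 | hs0
    · -- s = 0 : the integral is identically 0
      have hfun : (fun ω => ∫ u in (max (s - r) 0)..s, g (X ω u)) = fun _ => (0:ℝ) := by
        funext ω
        rw [show max (s - r) 0 = s by
          rw [max_eq_right (by linarith [hr.1])]
          exact hs0]
        exact intervalIntegral.integral_same
      rw [hfun]
      exact measurable_const
    · -- 0 < s : approximate from inside
      set a : ℝ := max (s - r) 0 with ha_def
      have ha0 : 0 ≤ a := le_max_right _ _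
      have has : a < s := max_lt (by linarith [hr.1]) hs0
      set c : ℕ → ℝ := fun m => s - (s - a) / (m + 1) with hc_def
      have h1cast : ∀ m : ℕ, (1:ℝ) ≤ (m:ℝ) + 1 := fun m => by
        have : (0:ℝ) ≤ (m:ℝ) := Nat.cast_nonneg m
        linarith
      have hac : ∀ m, a ≤ c m := by
        intro m
        have h1 : (s - a) / ((m:ℝ) + 1) ≤ s - a := div_le_self (by linarith) (h1cast m)
        simp only [hc_def]
        linarith
      have hcs : ∀ m, c m < s := by
        intro m
        have : 0 < (s - a) / ((m:ℝ) + 1) := div_pos (by linarith) (by positivity)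
        simp only [hc_def]
        linarith
      have hmeasm : ∀ m, Measurable[ptF X t]
          fun ω => ∫ u in a..(c m), g (X ω u) := by
        intro m
        refine meas_II hXrc hgc hM ha0 (hac m) fun u hu1 hu2 => ?_
        exact measurable_ptF_coord (le_trans ha0 hu1)
          (lt_of_lt_of_le (lt_of_le_of_lt hu2 (hcs m)) hs.2)
      refine @measurable_of_tendsto_metrizable Ω ℝ (ptF X t) _ _ _ _ _ _ hmeasm (tendsto_pi_nhds.2 fun ω => ?_)
      set M' : ℝ := max M 0 with hM'_def
      have hMM' : ∀ x, |g x| ≤ M' := fun x => le_trans (hM x) (le_max_left _ _)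
      refine tendsto_of_abs_sub_le (b := fun m => M' * ((s - a) / (m + 1)))
        (fun m => ?_) ?_
      · have hint1 : IntervalIntegrable (fun u => g (X ω u)) volume a s :=
          gz_intervalIntegrable (hXrc ω) hgc hMM' ha0 has.le
        have hint2 : IntervalIntegrable (fun u => g (X ω u)) volume a (c m) :=
          gz_intervalIntegrable (hXrc ω) hgc hMM' ha0 (hac m)
        have hkey := intervalIntegral.integral_interval_sub_left hint1 hint2
        have habs : (∫ u in a..(c m), g (X ω u)) - (∫ u in a..s, g (X ω u))
            = -(∫ u in (c m)..s, g (X ω u)) := by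
          rw [← hkey]; ring
        rw [habs, abs_neg]
        have := intervalIntegral.norm_integral_le_of_norm_le_const
          (C := M') (f := fun u => g (X ω u)) (a := c m) (b := s)
          (fun x _ => by rw [Real.norm_eq_abs]; exact hMM' _)
        rw [Real.norm_eq_abs] at this
        calc |∫ u in (c m)..s, g (X ω u)| ≤ M' * |s - c m| := this
          _ = M' * ((s - a) / (m + 1)) := by
              rw [show s - c m = (s - a) / ((m:ℝ) + 1) by simp only [hc_def]; ring,
                abs_of_nonneg (le_of_lt (div_pos (by linarith) (by positivity)))]
      · have := (hseq_tendsto a s).const_mul M'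
        simpa using this
  · -- pointwise values are recovered from backward averages ending below t
    refine iSup₂_le fun u hu => measurable_iff_comap_le.1 (meas_of_cb fun g hgc hgb => ?_)
    obtain ⟨M, hM⟩ := hgb
    have hut : u < t := hu.2
    set δ : ℕ → ℝ := fun n => (min (ε / 2) (t - u)) / (n + 1) with hδ_def
    have hminpos : 0 < min (ε / 2) (t - u) := lt_min (by linarith) (by linarith)
    have hp : ∀ n, 0 < δ n := fun n => div_pos hminpos (by positivity)
    have h1cast : ∀ n : ℕ, (1:ℝ) ≤ (n:ℝ) + 1 := fun n => by
      have : (0:ℝ) ≤ (n:ℝ) := Nat.cast_nonneg n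
      linarith
    have hδle : ∀ n, δ n ≤ min (ε / 2) (t - u) := fun n =>
      div_le_self hminpos.le (h1cast n)
    have h0 : Tendsto δ atTop (nhds 0) := by
      have := hseq_tendsto 0 (min (ε / 2) (t - u))
      simpa [hδ_def] using this
    have hmeasn : ∀ n, Measurable[RCx X t ε]
        fun ω => (∫ v in u..(u + δ n), g (X ω v)) / δ n := by
      intro n
      have hgen := measurable_RCx_gen X (t := t) (ε := ε)
        (s := u + δ n) (r := δ n)
        ⟨by linarith [hp n, hu.1], by
          have := hδle n
          have h2 : δ n ≤ t - u := le_trans this (min_le_right _ _)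
          linarith⟩
        ⟨hp n, by
          have := hδle n
          have h2 : δ n ≤ ε / 2 := le_trans this (min_le_left _ _)
          linarith⟩ ⟨hgc, M, hM⟩
      have emax : max ((u + δ n) - δ n) 0 = u := by
        rw [show (u + δ n) - δ n = u by ring]
        exact max_eq_left hu.1
      rw [emax] at hgen
      exact hgen.div_const (δ n)
    exact @measurable_of_tendsto_metrizable Ω ℝ (RCx X t ε) _ _ _ _ _ _ hmeasn
      (tendsto_pi_nhds.2 fun ω => gz_avg_tendsto (hXrc ω) hgc hM hu.1 hp h0)

end RC
section Cond
variable {Ω Γ : Type} {mΓ : MeasurableSpace Γ} {m0 : MeasurableSpace Ω}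
  {P : Measure Ω} [IsProbabilityMeasure P] {Y : Ω → Γ}
  {B C : MeasurableSpace Ω}

lemma integrable_of_bdd {f : Ω → ℝ} (hf : AEStronglyMeasurable[m0] f P) {M : ℝ}
    (hM : ∀ x, |f x| ≤ M) : Integrable f P :=
  Integrable.mono' (integrable_const M) hf
    (Eventually.of_forall fun x => by rw [Real.norm_eq_abs]; exact hM x)

lemma setIntegral_eq_indicator_mul (P : Measure Ω) {S : Set Ω} (hS : MeasurableSet S)
    (f : Ω → ℝ) :
    ∫ x in S, f x ∂P = ∫ x, S.indicator (fun _ => (1:ℝ)) x * f x ∂P := by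
  rw [← integral_indicator hS]
  congr 1
  funext ω
  by_cases h : ω ∈ S
  · simp [Set.indicator_of_mem h]
  · simp [Set.indicator_of_notMem h]

lemma abs_indicator_one_le (S : Set Ω) (ω : Ω) :
    |S.indicator (fun _ => (1:ℝ)) ω| ≤ 1 := by
  by_cases h : ω ∈ S
  · simp [Set.indicator_of_mem h]
  · simp [Set.indicator_of_notMem h]

/-- From RC-compatibility at level `(B, C)` to the conditional-independence-type
statement on indicators of `B`-sets. -/
lemma condA_of_compat (hY : Measurable[m0] Y) (hB : B ≤ m0)
    (hC : C ≤ MeasurableSpace.comap Y mΓ)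
    (hyp : ∀ h : Γ → ℝ, Measurable h → (∃ M, ∀ x, |h x| ≤ M) →
      P[fun ω => h (Y ω)|B ⊔ C] =ᵐ[P] P[fun ω => h (Y ω)|C]) :
    ∀ D : Set Ω, MeasurableSet[B] D →
      P[D.indicator (fun _ => (1:ℝ))|MeasurableSpace.comap Y mΓ]
        =ᵐ[P] P[D.indicator (fun _ => (1:ℝ))|C] := by
  intro D hD
  letI : MeasurableSpace Ω := m0
  have hA : MeasurableSpace.comap Y mΓ ≤ m0 := measurable_iff_comap_le.1 hY
  have hCm0 : C ≤ m0 := hC.trans hA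
  have hBC : B ⊔ C ≤ m0 := sup_le hB hCm0
  have hDm0 : MeasurableSet[m0] D := hB D hD
  have hDBC : MeasurableSet[B ⊔ C] D := (le_sup_left : B ≤ B ⊔ C) D hD
  have hind_int : Integrable (D.indicator fun _ => (1:ℝ)) P :=
    (integrable_const (1:ℝ)).indicator hDm0
  refine (ae_eq_condExp_of_forall_setIntegral_eq hA hind_int
    (fun s _ _ => integrable_condExp.integrableOn) ?_
    (StronglyMeasurable.aestronglyMeasurable (stronglyMeasurable_condExp.mono hC))).symm
  rintro S ⟨T, hT, rfl⟩ -
  set χ : Ω → ℝ := fun ω => T.indicator (fun _ => (1:ℝ)) (Y ω) with hχ_def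
  have hχmeas : Measurable[m0] χ := (measurable_const.indicator hT).comp hY
  have hχbd : ∀ ω, |χ ω| ≤ 1 := fun ω => abs_indicator_one_le T (Y ω)
  have hχint : Integrable χ P := integrable_of_bdd hχmeas.aestronglyMeasurable hχbd
  have hχind : (Y ⁻¹' T).indicator (fun _ => (1:ℝ)) = χ := by
    funext ω
    by_cases h : Y ω ∈ T
    · simp [Set.indicator_of_mem, h, hχ_def]
    · simp [Set.indicator_of_notMem, h, hχ_def]
  have hcc : P[χ|B ⊔ C] =ᵐ[P] P[χ|C] :=
    hyp (T.indicator fun _ => (1:ℝ)) (measurable_const.indicator hT)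
      ⟨1, fun x => abs_indicator_one_le T x⟩
  set ρ : Ω → ℝ := P[D.indicator (fun _ => (1:ℝ))|C] with hρ_def
  set κ : Ω → ℝ := P[χ|C] with hκ_def
  have hρint : Integrable ρ P := integrable_condExp
  have hκint : Integrable κ P := integrable_condExp
  have hρχint : Integrable (fun x => χ x * ρ x) P :=
    Integrable.bdd_mul hρint hχmeas.aestronglyMeasurable
      (Eventually.of_forall fun x => by rw [Real.norm_eq_abs]; exact hχbd x)
  -- LHS: ∫ in Y⁻¹T, ρ = ∫ ρ * κ
  have hLHS : ∫ x in Y ⁻¹' T, ρ x ∂P = ∫ x, ρ x * κ x ∂P := by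
    rw [setIntegral_eq_indicator_mul P (hY hT) ρ]
    have e1 : (fun x => (Y ⁻¹' T).indicator (fun _ => (1:ℝ)) x * ρ x)
        = fun x => ρ x * χ x := by
      funext x
      rw [hχind]
      ring
    rw [e1]
    have h2 : Integrable (fun x => ρ x * χ x) P := by
      refine hρχint.congr (Eventually.of_forall fun x => ?_)
      ring
    rw [← integral_condExp hCm0 (f := fun x => ρ x * χ x)]
    refine integral_congr_ae ?_
    have := condExp_mul_of_stronglyMeasurable_left (μ := P) (m := C) (f := ρ) (g := χ)
      stronglyMeasurable_condExp (by simpa [Pi.mul_def] using h2) hχint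
    simpa [Pi.mul_def] using this
  -- RHS: ∫ in Y⁻¹T, 1_D = ∫ κ * ρ
  have hRHS : ∫ x in Y ⁻¹' T, D.indicator (fun _ => (1:ℝ)) x ∂P
      = ∫ x, κ x * ρ x ∂P := by
    have e0 : ∫ x in Y ⁻¹' T, D.indicator (fun _ => (1:ℝ)) x ∂P
        = ∫ x in D, χ x ∂P := by
      rw [setIntegral_eq_indicator_mul P (hY hT) _,
        setIntegral_eq_indicator_mul P hDm0 χ]
      refine integral_congr_ae (Eventually.of_forall fun x => ?_)
      rw [hχind]
      ring
    rw [e0, ← setIntegral_condExp hBC hχint hDBC]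
    have e1 : ∫ x in D, (P[χ|B ⊔ C]) x ∂P = ∫ x in D, κ x ∂P :=
      setIntegral_congr_ae hDm0 (hcc.mono fun x hx _ => hx)
    rw [e1, setIntegral_eq_indicator_mul P hDm0 κ]
    have e2 : (fun x => D.indicator (fun _ => (1:ℝ)) x * κ x)
        = fun x => κ x * D.indicator (fun _ => (1:ℝ)) x := by
      funext x
      ring
    rw [e2]
    have h2 : Integrable (fun x => κ x * D.indicator (fun _ => (1:ℝ)) x) P := by
      refine (Integrable.bdd_mul hκint
        ((measurable_const.indicator hDm0).aestronglyMeasurable)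
        (Eventually.of_forall fun x => by rw [Real.norm_eq_abs]; exact abs_indicator_one_le D x)).congr
        (Eventually.of_forall fun x => ?_)
      ring
    rw [← integral_condExp hCm0 (f := fun x => κ x * D.indicator (fun _ => (1:ℝ)) x)]
    refine integral_congr_ae ?_
    have := condExp_mul_of_stronglyMeasurable_left (μ := P) (m := C) (f := κ)
      (g := D.indicator (fun _ => (1:ℝ))) stronglyMeasurable_condExp
      (by simpa [Pi.mul_def] using h2) hind_int
    simpa [Pi.mul_def] using this
  rw [hLHS, hRHS]
  exact integral_congr_ae (Eventually.of_forall fun x => by ring)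

/-- From the indicator statement back to RC-compatibility. -/
lemma compat_of_condA (hY : Measurable[m0] Y) (hB : B ≤ m0)
    (hC : C ≤ MeasurableSpace.comap Y mΓ)
    (hyp : ∀ D : Set Ω, MeasurableSet[B] D →
      P[D.indicator (fun _ => (1:ℝ))|MeasurableSpace.comap Y mΓ]
        =ᵐ[P] P[D.indicator (fun _ => (1:ℝ))|C]) :
    ∀ h : Γ → ℝ, Measurable h → (∃ M, ∀ x, |h x| ≤ M) →
      P[fun ω => h (Y ω)|B ⊔ C] =ᵐ[P] P[fun ω => h (Y ω)|C] := by
  intro h hhm hhb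
  letI : MeasurableSpace Ω := m0
  obtain ⟨M0, hM0⟩ := hhb
  set M : ℝ := max M0 0 with hM_def
  have hM : ∀ x, |h x| ≤ M := fun x => le_trans (hM0 x) (le_max_left _ _)
  have hA : MeasurableSpace.comap Y mΓ ≤ m0 := measurable_iff_comap_le.1 hY
  have hCm0 : C ≤ m0 := hC.trans hA
  have hBC : B ⊔ C ≤ m0 := sup_le hB hCm0
  set f : Ω → ℝ := fun ω => h (Y ω) with hf_def
  have hfmeas : Measurable[m0] f := hhm.comp hY
  have hfmeasA : Measurable[MeasurableSpace.comap Y mΓ] f :=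
    hhm.comp (measurable_iff_comap_le.2 le_rfl)
  have hfb : ∀ ω, |f ω| ≤ M := fun ω => hM (Y ω)
  have hfint : Integrable f P := integrable_of_bdd hfmeas.aestronglyMeasurable hfb
  set gg : Ω → ℝ := P[f|C] with hgg_def
  have hggint : Integrable gg P := integrable_condExp
  -- the π-system of intersections
  set piSys : Set (Set Ω) := {S | ∃ D Cs : Set Ω,
    MeasurableSet[B] D ∧ MeasurableSet[C] Cs ∧ S = D ∩ Cs} with hpiSys_def
  have h_eq : (B ⊔ C) = MeasurableSpace.generateFrom piSys := by
    apply le_antisymm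
    · refine sup_le ?_ ?_
      · conv_lhs => rw [← @MeasurableSpace.generateFrom_measurableSet Ω B]
        refine MeasurableSpace.generateFrom_mono fun D hD => ?_
        exact ⟨D, Set.univ, hD, MeasurableSet.univ, (Set.inter_univ D).symm⟩
      · conv_lhs => rw [← @MeasurableSpace.generateFrom_measurableSet Ω C]
        refine MeasurableSpace.generateFrom_mono fun Cs hCs => ?_
        exact ⟨Set.univ, Cs, MeasurableSet.univ, hCs, (Set.univ_inter Cs).symm⟩
    · refine MeasurableSpace.generateFrom_le fun S hS => ?_
      obtain ⟨D, Cs, hD, hCs, rfl⟩ := hS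
      exact MeasurableSet.inter ((le_sup_left : B ≤ B ⊔ C) D hD)
        ((le_sup_right : C ≤ B ⊔ C) Cs hCs)
  have h_pi : IsPiSystem piSys := by
    rintro S1 ⟨D1, C1, hD1, hC1, rfl⟩ S2 ⟨D2, C2, hD2, hC2, rfl⟩ -
    exact ⟨D1 ∩ D2, C1 ∩ C2, hD1.inter hD2, hC1.inter hC2,
      Set.inter_inter_inter_comm D1 C1 D2 C2⟩
  -- the key integral identity on all B ⊔ C sets
  have good : ∀ S : Set Ω, MeasurableSet[B ⊔ C] S →
      ∫ x in S, f x ∂P = ∫ x in S, gg x ∂P := by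
    have hint_eq : ∫ x, f x ∂P = ∫ x, gg x ∂P := (integral_condExp hCm0).symm
    refine MeasurableSpace.induction_on_inter (m := B ⊔ C)
      (C := fun S _ => ∫ x in S, f x ∂P = ∫ x in S, gg x ∂P) (s := piSys) h_eq h_pi ?_ ?_ ?_ ?_
    · simp
    · rintro S ⟨D, Cs, hD, hCs, rfl⟩
      have hDm0 : MeasurableSet[m0] D := hB D hD
      have hCsm0 : MeasurableSet[m0] Cs := hCm0 Cs hCs
      set χ : Ω → ℝ := Cs.indicator (fun _ => (1:ℝ)) with hχ_def
      set ιD : Ω → ℝ := D.indicator (fun _ => (1:ℝ)) with hιD_def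
      have hχm0 : Measurable[m0] χ := measurable_const.indicator hCsm0
      have hχC : Measurable[C] χ := measurable_const.indicator hCs
      have hιDm0 : Measurable[m0] ιD := measurable_const.indicator hDm0
      have hχb := abs_indicator_one_le Cs
      have hιDb := abs_indicator_one_le D
      have hιDint : Integrable ιD P := integrable_of_bdd hιDm0.aestronglyMeasurable hιDb
      have hχint : Integrable χ P := integrable_of_bdd hχm0.aestronglyMeasurable hχb
      have hρ := hyp D hD
      set ξ : Ω → ℝ := P[ιD|C] with hξ_def
      have hξint : Integrable ξ P := integrable_condExp
      -- φ = χ * f is A-measurable and bounded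
      set φ : Ω → ℝ := fun ω => χ ω * f ω with hφ_def
      have hφA : Measurable[MeasurableSpace.comap Y mΓ] φ :=
        (measurable_const.indicator (hC Cs hCs)).mul hfmeasA
      have hφm0 : Measurable[m0] φ := hχm0.mul hfmeas
      have hφb : ∀ ω, |φ ω| ≤ M := fun ω => by
        rw [hφ_def, abs_mul]
        calc |χ ω| * |f ω| ≤ 1 * M :=
          mul_le_mul (hχb ω) (hfb ω) (abs_nonneg _) zero_le_one
        _ = M := one_mul M
      have hφint : Integrable φ P := integrable_of_bdd hφm0.aestronglyMeasurable hφb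
      have hφιint : Integrable (fun x => φ x * ιD x) P :=
        integrable_of_bdd (hφm0.mul hιDm0).aestronglyMeasurable (M := M) (fun x => by
          rw [abs_mul]
          calc |φ x| * |ιD x| ≤ M * 1 :=
            mul_le_mul (hφb x) (hιDb x) (abs_nonneg _) (le_trans (abs_nonneg _) (hφb x))
          _ = M := mul_one M)
      -- LHS
      have hL : ∫ x in D ∩ Cs, f x ∂P = ∫ x, χ x * ξ x * gg x ∂P := by
        rw [setIntegral_eq_indicator_mul P (hDm0.inter hCsm0) f]
        have e1 : (fun x => (D ∩ Cs).indicator (fun _ => (1:ℝ)) x * f x)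
            = fun x => φ x * ιD x := by
          funext x
          by_cases h1 : x ∈ D <;> by_cases h2 : x ∈ Cs <;>
            simp [hφ_def, hχ_def, hιD_def, Set.indicator_of_mem,
              Set.indicator_of_notMem, h1, h2, Set.mem_inter_iff]
        rw [e1, ← integral_condExp hA (f := fun x => φ x * ιD x)]
        have e2 : P[fun x => φ x * ιD x|MeasurableSpace.comap Y mΓ]
            =ᵐ[P] fun x => φ x * ξ x := by
          have h3 := condExp_mul_of_stronglyMeasurable_left (μ := P)
            (m := MeasurableSpace.comap Y mΓ) (f := φ) (g := ιD)
            hφA.stronglyMeasurable (by simpa [Pi.mul_def] using hφιint) hιDint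
          have h4 : (fun x => φ x * (P[ιD|MeasurableSpace.comap Y mΓ]) x)
              =ᵐ[P] fun x => φ x * ξ x := by
            filter_upwards [hρ] with x hx
            rw [hx]
          have h3' : P[fun x => φ x * ιD x|MeasurableSpace.comap Y mΓ]
              =ᵐ[P] fun x => φ x * (P[ιD|MeasurableSpace.comap Y mΓ]) x := by
            simpa [Pi.mul_def] using h3
          exact h3'.trans h4
        rw [integral_congr_ae e2]
        -- now ∫ φ ξ = ∫ (χ ξ) f = ∫ (χ ξ) gg
        have e3 : (fun x => φ x * ξ x) = fun x => (χ x * ξ x) * f x := by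
          funext x
          rw [hφ_def]
          ring
        rw [e3]
        have hψsm : StronglyMeasurable[C] (fun x => χ x * ξ x) :=
          (hχC.stronglyMeasurable).mul stronglyMeasurable_condExp
        have hψint : Integrable (fun x => χ x * ξ x) P :=
          Integrable.bdd_mul hξint hχm0.aestronglyMeasurable
            (Eventually.of_forall fun x => by rw [Real.norm_eq_abs]; exact hχb x)
        have hψfint : Integrable (fun x => (χ x * ξ x) * f x) P := by
          refine (Integrable.bdd_mul hψint hfmeas.aestronglyMeasurable
            (Eventually.of_forall fun x => by rw [Real.norm_eq_abs]; exact hfb x)).congr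
            (Eventually.of_forall fun x => ?_)
          ring
        rw [← integral_condExp hCm0 (f := fun x => (χ x * ξ x) * f x)]
        refine integral_congr_ae ?_
        have h5 := condExp_mul_of_stronglyMeasurable_left (μ := P) (m := C)
          (f := fun x => χ x * ξ x) (g := f) hψsm
          (by simpa [Pi.mul_def] using hψfint) hfint
        have h6 := (by simpa [Pi.mul_def] using h5 :
          P[fun x => (χ x * ξ x) * f x|C] =ᵐ[P] fun x => (χ x * ξ x) * gg x)
        exact h6.trans (Eventually.of_forall fun x => by ring)
      -- RHS
      have hR : ∫ x in D ∩ Cs, gg x ∂P = ∫ x, χ x * ξ x * gg x ∂P := by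
        rw [setIntegral_eq_indicator_mul P (hDm0.inter hCsm0) gg]
        have e1 : (fun x => (D ∩ Cs).indicator (fun _ => (1:ℝ)) x * gg x)
            = fun x => (χ x * gg x) * ιD x := by
          funext x
          by_cases h1 : x ∈ D <;> by_cases h2 : x ∈ Cs <;>
            simp [hχ_def, hιD_def, Set.indicator_of_mem,
              Set.indicator_of_notMem, h1, h2, Set.mem_inter_iff]
        rw [e1]
        have hψ'sm : StronglyMeasurable[C] (fun x => χ x * gg x) :=
          (hχC.stronglyMeasurable).mul stronglyMeasurable_condExp
        have hψ'int : Integrable (fun x => χ x * gg x) P :=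
          Integrable.bdd_mul hggint hχm0.aestronglyMeasurable
            (Eventually.of_forall fun x => by rw [Real.norm_eq_abs]; exact hχb x)
        have hψ'ιint : Integrable (fun x => (χ x * gg x) * ιD x) P := by
          refine (Integrable.bdd_mul hψ'int hιDm0.aestronglyMeasurable
            (Eventually.of_forall fun x => by rw [Real.norm_eq_abs]; exact hιDb x)).congr
            (Eventually.of_forall fun x => ?_)
          ring
        rw [← integral_condExp hCm0 (f := fun x => (χ x * gg x) * ιD x)]
        refine integral_congr_ae ?_
        have h5 := condExp_mul_of_stronglyMeasurable_left (μ := P) (m := C)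
          (f := fun x => χ x * gg x) (g := ιD) hψ'sm
          (by simpa [Pi.mul_def] using hψ'ιint) hιDint
        have h6 := (by simpa [Pi.mul_def] using h5 :
          P[fun x => (χ x * gg x) * ιD x|C] =ᵐ[P] fun x => (χ x * gg x) * ξ x)
        exact h6.trans (Eventually.of_forall fun x => by ring)
      rw [hL, hR]
    · intro S hSm hQ
      have hSm0 : MeasurableSet[m0] S := hBC S hSm
      have h1 := integral_add_compl hSm0 hfint
      have h2 := integral_add_compl hSm0 hggint
      linarith [hint_eq]
    · intro ψ hdisj hmeas hQ
      have hm0 : ∀ i, MeasurableSet[m0] (ψ i) := fun i => hBC _ (hmeas i)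
      rw [integral_iUnion hm0 hdisj hfint.integrableOn,
        integral_iUnion hm0 hdisj hggint.integrableOn]
      exact tsum_congr hQ
  refine (ae_eq_condExp_of_forall_setIntegral_eq hBC hfint
    (fun s _ _ => integrable_condExp.integrableOn)
    (fun S hS _ => (good S hS).symm)
    (StronglyMeasurable.aestronglyMeasurable
      (stronglyMeasurable_condExp.mono le_sup_right))).symm


lemma version_trick {f ξ : Ω → ℝ} {mseq : ℕ → MeasurableSpace Ω} {mtar : MeasurableSpace Ω}
    (hanti : ∀ i j, i ≤ j → mseq j ≤ mseq i) (hle0 : mseq 0 ≤ m0) (htar0 : mtar ≤ mseq 0)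
    (htarm0 : mtar ≤ m0) (hinf : (⨅ n, mseq n) ≤ mtar)
    (hv : ∀ n, ξ =ᵐ[P] P[f|mseq n]) : P[f|mtar] =ᵐ[P] ξ := by
  have hξint : Integrable ξ P := integrable_condExp.congr (hv 0).symm
  set Z' : Ω → ℝ := fun ω => Filter.limsup (fun n => (P[f|mseq n]) ω) atTop with hZ'
  have hZ'meas : ∀ m, Measurable[mseq m] Z' := by
    intro m
    have he : Z' = fun ω => Filter.limsup (fun n => (P[f|mseq (n + m)]) ω) atTop := by
      funext ω
      exact (Filter.limsup_nat_add (fun n => (P[f|mseq n]) ω) m).symm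
    rw [he]
    exact Measurable.limsup fun n =>
      (stronglyMeasurable_condExp.measurable).mono (hanti m (n + m) (Nat.le_add_left m n)) le_rfl
  have hZ'tar : Measurable[mtar] Z' := by
    have hZ'inf : Measurable[⨅ n, mseq n] Z' := fun s hs =>
      MeasurableSpace.measurableSet_iInf.2 fun n => hZ'meas n hs
    exact hZ'inf.mono hinf le_rfl
  have hZ'ae : Z' =ᵐ[P] ξ := by
    have hall : ∀ᵐ ω ∂P, ∀ n, (P[f|mseq n]) ω = ξ ω := ae_all_iff.2 fun n => (hv n).symm
    filter_upwards [hall] with ω hω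
    rw [hZ']
    simp only [hω]
    exact Filter.limsup_const (ξ ω)
  have hZ'int : Integrable Z' P := hξint.congr hZ'ae.symm
  calc P[f|mtar] =ᵐ[P] P[P[f|mseq 0]|mtar] := (condExp_condExp_of_le htar0 hle0).symm
    _ =ᵐ[P] P[ξ|mtar] := condExp_congr_ae (hv 0).symm
    _ =ᵐ[P] P[Z'|mtar] := condExp_congr_ae hZ'ae.symm
    _ =ᵐ[P] Z' := by
        rw [condExp_of_stronglyMeasurable htarm0 hZ'tar.stronglyMeasurable hZ'int]
    _ =ᵐ[P] ξ := hZ'ae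

lemma condexp_sandwich {f : Ω → ℝ} {mlo mmid mhi : MeasurableSpace Ω}
    (h1 : mlo ≤ mmid) (h2 : mmid ≤ mhi) (h3 : mhi ≤ m0)
    (hv : P[f|mhi] =ᵐ[P] P[f|mlo]) : P[f|mmid] =ᵐ[P] P[f|mhi] :=
  calc P[f|mmid] =ᵐ[P] P[P[f|mhi]|mmid] := (condExp_condExp_of_le h2 h3).symm
    _ =ᵐ[P] P[P[f|mlo]|mmid] := condExp_congr_ae hv
    _ = P[f|mlo] := condExp_of_stronglyMeasurable (h2.trans h3)
        (stronglyMeasurable_condExp.mono h1) integrable_condExp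
    _ =ᵐ[P] P[f|mhi] := hv.symm


end Cond
end Stmt13Aux

open Filter Set

/-- Lemma 3.5 of Kurtz: for right-continuous processes `X` and `Y`, RC-compatibility
is equivalent to `E[h(Y)|F^Y_{t+} ∨ F^X_{t−}] = E[h(Y)|F^Y_{t+}]` for all `t > 0`. -/
theorem stmt13
    {E1 E2 : Type} [MeasurableSpace E1] [TopologicalSpace E1] [PolishSpace E1] [BorelSpace E1]
    [MeasurableSpace E2] [TopologicalSpace E2] [PolishSpace E2] [BorelSpace E2]
    {Ω : Type} [MeasurableSpace Ω] (P : Measure Ω) [IsProbabilityMeasure P]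
    (X : Ω → ℝ → E1) (Y : Ω → ℝ → E2)
    (hXmeas : ∀ u : ℝ, Measurable (fun ω => X ω u))
    (hYmeas : ∀ u : ℝ, Measurable (fun ω => Y ω u))
    (hXrc : ∀ ω, ∀ t : ℝ, 0 ≤ t → ContinuousWithinAt (X ω) (Set.Ici t) t)
    (hYrc : ∀ ω, ∀ t : ℝ, 0 ≤ t → ContinuousWithinAt (Y ω) (Set.Ici t) t) :
    -- X is RC-compatible with Y
    (∀ (t ε : ℝ), 0 ≤ t → 0 < ε →
      ∀ h : (ℝ → E2) → ℝ, Measurable h → (∃ C, ∀ x, |h x| ≤ C) →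
        P[fun ω => h (Y ω)|RCx X t ε ⊔ RCy Y t ε] =ᵐ[P] P[fun ω => h (Y ω)|RCy Y t ε])
    ↔
    -- iff E[h(Y)|F^Y_{t+} ∨ F^X_{t−}] = E[h(Y)|F^Y_{t+}] for all t > 0
    (∀ t : ℝ, 0 < t →
      ∀ h : (ℝ → E2) → ℝ, Measurable h → (∃ C, ∀ x, |h x| ≤ C) →
        P[fun ω => h (Y ω)|(⨅ s ∈ Set.Ioi t, natF Y s) ⊔ (⨆ s ∈ Set.Ico (0:ℝ) t, natF X s)]
          =ᵐ[P] P[fun ω => h (Y ω)|⨅ s ∈ Set.Ioi t, natF Y s]) := by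
  classical
  have hYpath : Measurable Y := measurable_pi_lambda Y hYmeas
  have hptFX_le : ∀ τ : ℝ, Stmt13Aux.ptF X τ ≤ ‹MeasurableSpace Ω› :=
    fun τ => iSup₂_le fun u _ => measurable_iff_comap_le.1 (hXmeas u)
  have hptFY_le : ∀ τ : ℝ, Stmt13Aux.ptF Y τ ≤ ‹MeasurableSpace Ω› :=
    fun τ => iSup₂_le fun u _ => measurable_iff_comap_le.1 (hYmeas u)
  have hnatFY_le : ∀ s : ℝ, natF Y s ≤ ‹MeasurableSpace Ω› :=
    fun s => iSup₂_le fun u _ => measurable_iff_comap_le.1 (hYmeas u)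
  have hHy_le : ∀ τ : ℝ, (⨅ s ∈ Set.Ioi τ, natF Y s) ≤ ‹MeasurableSpace Ω› :=
    fun τ => le_trans (iInf₂_le (τ + 1) (by simp)) (hnatFY_le _)
  have hptFY_le_A : ∀ τ : ℝ,
      Stmt13Aux.ptF Y τ ≤ MeasurableSpace.comap Y MeasurableSpace.pi :=
    fun τ => Stmt13Aux.ptF_le_comap τ
  have hHy_le_A : ∀ τ : ℝ, (⨅ s ∈ Set.Ioi τ, natF Y s)
      ≤ MeasurableSpace.comap Y MeasurableSpace.pi :=
    fun τ => Stmt13Aux.iInf_natF_le_comap τ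
  constructor
  · -- RC-compatibility implies the `t+ / t−` statement
    intro hcompat t ht h hh hbd
    rw [Stmt13Aux.sup_natF_eq_ptF t, sup_comm]
    refine Stmt13Aux.compat_of_condA (mΓ := MeasurableSpace.pi) hYpath (hptFX_le t)
      (hHy_le_A t) ?_ h hh hbd
    intro D hD
    refine (Stmt13Aux.version_trick (mseq := fun n => Stmt13Aux.ptF Y (t + 1 / (n + 1)))
      ?_ ?_ ?_ ?_ ?_ ?_).symm
    · intro i j hij
      refine Stmt13Aux.ptF_mono ?_
      have h1 : (0:ℝ) < (i:ℝ) + 1 := by positivity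
      have h2 : (i:ℝ) + 1 ≤ (j:ℝ) + 1 := by
        have : (i:ℝ) ≤ (j:ℝ) := Nat.cast_le.2 hij
        linarith
      have := one_div_le_one_div_of_le h1 h2
      linarith
    · exact hptFY_le _
    · exact Stmt13Aux.iInf_natF_le_ptF (by positivity)
    · exact hHy_le t
    · exact Stmt13Aux.iInf_ptF_le_iInf_natF t
    · intro n
      have hεn : (0:ℝ) < 1 / (n + 1) := by positivity
      have hcn := hcompat t (1 / (n + 1)) ht.le hεn
      rw [Stmt13Aux.RCx_eq hXrc ht.le hεn, Stmt13Aux.RCy_eq hYrc ht.le hεn] at hcn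
      exact Stmt13Aux.condA_of_compat hYpath (hptFX_le t) (hptFY_le_A _) hcn D hD
  · -- the `t+ / t−` statement implies RC-compatibility
    intro hGiven t ε ht hε h hh hbd
    rw [Stmt13Aux.RCx_eq hXrc ht hε, Stmt13Aux.RCy_eq hYrc ht hε]
    have ht' : (0:ℝ) < t + ε / 2 := by linarith
    have hcn' : ∀ h' : (ℝ → E2) → ℝ, Measurable h' → (∃ C, ∀ x, |h' x| ≤ C) →
        P[fun ω => h' (Y ω)|Stmt13Aux.ptF X (t + ε / 2)
            ⊔ (⨅ s ∈ Set.Ioi (t + ε / 2), natF Y s)]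
          =ᵐ[P] P[fun ω => h' (Y ω)|⨅ s ∈ Set.Ioi (t + ε / 2), natF Y s] := by
      intro h' hm hb
      have := hGiven (t + ε / 2) ht' h' hm hb
      rwa [Stmt13Aux.sup_natF_eq_ptF, sup_comm] at this
    have hind := Stmt13Aux.condA_of_compat hYpath (hptFX_le (t + ε / 2))
      (hHy_le_A (t + ε / 2)) hcn'
    refine Stmt13Aux.compat_of_condA hYpath (hptFX_le t) (hptFY_le_A (t + ε)) ?_ h hh hbd
    intro D hD
    have hD' : MeasurableSet[Stmt13Aux.ptF X (t + ε / 2)] D :=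
      Stmt13Aux.ptF_mono (by linarith) D hD
    have h1 := hind D hD'
    have hlo_mid : (⨅ s ∈ Set.Ioi (t + ε / 2), natF Y s) ≤ Stmt13Aux.ptF Y (t + ε) := by
      have := Stmt13Aux.iInf_natF_le_ptF (Z := Y) (t := t + ε / 2) (ε := ε / 2)
        (by linarith)
      rwa [show t + ε / 2 + ε / 2 = t + ε by ring] at this
    exact (Stmt13Aux.condexp_sandwich hlo_mid (hptFY_le_A (t + ε))
      (measurable_iff_comap_le.1 hYpath) h1).symm
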